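/- arXiv:2509.17591 — 2 statements merged into one kernel-verified Lean document; each statement's English description precedes it below -/
import Mathlib

section
/- Let ≤_T be the lexicographic order with X₁ > X₂. Let 2 ≤ t ≤ 4 with t ≤ ⌊r₁/2⌋ and t ≤ ⌊r₂/2⌋, let e ∈ 𝔽(r₁,r₂) with ω(e) ≤ t, let τ ∈ 𝓘, and let U be the syndrome table afforded by τ and e. Let l = (l₁,l₂) ∈ 𝔉 with l₂ ≠ 0 and l₁ = 1. Let F = {f^(1), f^(2)} be a minimal set of polynomials for u^l with defining points s^(1), s^(2) satisfying s^(1)_1 = 1 and s^(2)_2 = t, and let (g, k₁) be an auxiliary polynomial for index 1 with v₁ = g[U]_{k₁} ≠ 0. Then there exists b ∈ L such that the polynomial h_b = f^(1) − (b/v₁)·g generates u^l and satisfies h_b[U]_k = 0 for every k ∈ B(2t+1) with l ≤_T k. -/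
/-- A monomial order on ℕ × ℕ: a linear order compatible with addition
for which (0,0) is the least element. -/
structure MonOrd where
  le : ℕ × ℕ → ℕ × ℕ → Prop
  refl : ∀ a, le a a
  trans : ∀ a b c, le a b → le b c → le a c
  antisymm : ∀ a b, le a b → le b a → a = b
  total : ∀ a b, le a b ∨ le b a
  add_right : ∀ a b c, le a b → le (a + c) (b + c)
  zero_le : ∀ a, le (0, 0) a

/-- Strict version of a monomial order. -/
def MonOrd.lt (T : MonOrd) (a b : ℕ × ℕ) : Prop := T.le a b ∧ a ≠ b

/-- `s` is the leading power product exponent of `f` w.r.t. `T`. -/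
def IsLP {L : Type} [Field L] (T : MonOrd) (f : (ℕ × ℕ) →₀ L) (s : ℕ × ℕ) : Prop :=
  s ∈ f.support ∧ ∀ m ∈ f.support, T.le m s

/-- `f[U]_n`, computed with respect to a given leading exponent `s` of `f`. -/
noncomputable def fApp {L : Type} [Field L] (U : ℕ × ℕ → L) (f : (ℕ × ℕ) →₀ L)
    (s n : ℕ × ℕ) : L :=
  if s.1 ≤ n.1 ∧ s.2 ≤ n.2 then
    ∑ m ∈ f.support, f m * U (m.1 + n.1 - s.1, m.2 + n.2 - s.2)
  else 0

/-- `f` generates the doubly periodic array `U`. -/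
def GeneratesU {L : Type} [Field L] (T : MonOrd) (U : ℕ × ℕ → L) (f : (ℕ × ℕ) →₀ L) : Prop :=
  ∃ s, IsLP T f s ∧ ∀ n, fApp U f s n = 0

/-- `f` generates the finite subarray `u^l` of `U`. -/
def GeneratesUpTo {L : Type} [Field L] (T : MonOrd) (U : ℕ × ℕ → L) (l : ℕ × ℕ)
    (f : (ℕ × ℕ) →₀ L) : Prop :=
  ∃ s, IsLP T f s ∧ ∀ k, s.1 ≤ k.1 → s.2 ≤ k.2 → T.lt k l → fApp U f s k = 0

/-- `U` is a doubly periodic array of period r₁ × r₂. -/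
def DoublyPeriodic {L : Type} (r₁ r₂ : ℕ) (U : ℕ × ℕ → L) : Prop :=
  ∀ n m : ℕ × ℕ, n.1 % r₁ = m.1 % r₁ → n.2 % r₂ = m.2 % r₂ → U n = U m

/-- Evaluation of a bivariate polynomial at a point `(x, y)`. -/
noncomputable def polyEval {L : Type} [Field L] (f : (ℕ × ℕ) →₀ L) (x y : L) : L :=
  ∑ m ∈ f.support, f m * x ^ m.1 * y ^ m.2

/-- The syndrome table afforded by `τ` and `e`:  `u_n = e(α^(τ+n))`. -/
noncomputable def synTable {F L : Type} [Field F] [Field L] [Algebra F L] {r₁ r₂ : ℕ}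
    (α₁ α₂ : L) (τ : Fin r₁ × Fin r₂) (e : Fin r₁ × Fin r₂ → F) : ℕ × ℕ → L :=
  fun n => ∑ p : Fin r₁ × Fin r₂,
    algebraMap F L (e p) * (α₁ ^ ((τ.1 : ℕ) + n.1)) ^ (p.1 : ℕ)
      * (α₂ ^ ((τ.2 : ℕ) + n.2)) ^ (p.2 : ℕ)

/-- The weight ω(e): number of nonzero coefficients. -/
noncomputable def wt {F : Type} [Field F] {r₁ r₂ : ℕ} (e : Fin r₁ × Fin r₂ → F) : ℕ :=
  {p | e p ≠ 0}.ncard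

/-- The hyperbolic set B(δ) of amplitude δ inside {0,…,r₁−1} × {0,…,r₂−1}. -/
def hypB (r₁ r₂ δ : ℕ) : Set (ℕ × ℕ) :=
  {l | l.1 < r₁ ∧ l.2 < r₂ ∧ (l.1 + 1) * (l.2 + 1) ≤ δ ∧ l ≠ (δ - 1, 0) ∧ l ≠ (0, δ - 1)}

/-- The border set 𝔉 = {l ∈ B(2t+1) : 2t ≤ (l₁+1)(l₂+1)}. -/
def frontF (r₁ r₂ t : ℕ) : Set (ℕ × ℕ) :=
  {l ∈ hypB r₁ r₂ (2 * t + 1) | 2 * t ≤ (l.1 + 1) * (l.2 + 1)}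

/-- The lexicographic order with X₁ > X₂. -/
def lexMonOrd : MonOrd where
  le a b := a.1 < b.1 ∨ (a.1 = b.1 ∧ a.2 ≤ b.2)
  refl a := by omega
  trans a b c h1 h2 := by omega
  antisymm a b h1 h2 := by
    obtain ⟨a1, a2⟩ := a; obtain ⟨b1, b2⟩ := b
    simp_all only [Prod.mk.injEq]; omega
  total a b := by omega
  add_right a b c h := by
    obtain ⟨a1, a2⟩ := a; obtain ⟨b1, b2⟩ := b; obtain ⟨c1, c2⟩ := c
    simp_all only [Prod.mk_add_mk]; omega
  zero_le a := by
    obtain ⟨a1, a2⟩ := a; simp only []; omega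

/-- The (reverse) graded order with X₂ > X₁. -/
def grMonOrd : MonOrd where
  le a b := a.1 + a.2 < b.1 + b.2 ∨ (a.1 + a.2 = b.1 + b.2 ∧ a.2 ≤ b.2)
  refl a := by omega
  trans a b c h1 h2 := by omega
  antisymm a b h1 h2 := by
    obtain ⟨a1, a2⟩ := a; obtain ⟨b1, b2⟩ := b
    simp_all only [Prod.mk.injEq]; omega
  total a b := by omega
  add_right a b c h := by
    obtain ⟨a1, a2⟩ := a; obtain ⟨b1, b2⟩ := b; obtain ⟨c1, c2⟩ := c
    simp_all only [Prod.mk_add_mk]; omega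
  zero_le a := by
    obtain ⟨a1, a2⟩ := a; simp only []; omega

/-- The ideal (X₁^{r₁} − 1, X₂^{r₂} − 1) of L[X₁,X₂]. -/
noncomputable def periodIdeal (L : Type) [Field L] (r₁ r₂ : ℕ) :
    Ideal (AddMonoidAlgebra L (ℕ × ℕ)) :=
  Ideal.span {AddMonoidAlgebra.single (r₁, 0) 1 - 1, AddMonoidAlgebra.single (0, r₂) 1 - 1}


section Aux

open Finset

private lemma synExpand {F L : Type} [Field F] [Field L] [Algebra F L] {r₁ r₂ : ℕ}
    (α₁ α₂ : L) (τ : Fin r₁ × Fin r₂) (e : Fin r₁ × Fin r₂ → F)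
    (f : (ℕ × ℕ) →₀ L) (s n : ℕ × ℕ) (h1 : s.1 ≤ n.1) (h2 : s.2 ≤ n.2) :
    fApp (synTable α₁ α₂ τ e) f s n =
      ∑ p : Fin r₁ × Fin r₂,
        (algebraMap F L (e p) * (α₁ ^ ((τ.1 : ℕ) + (n.1 - s.1))) ^ (p.1 : ℕ)
          * (α₂ ^ ((τ.2 : ℕ) + (n.2 - s.2))) ^ (p.2 : ℕ))
        * (∑ m ∈ f.support, f m * ((α₁ ^ (p.1 : ℕ)) ^ m.1 * (α₂ ^ (p.2 : ℕ)) ^ m.2)) := by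
  rw [fApp, if_pos ⟨h1, h2⟩]
  simp only [synTable, Finset.mul_sum]
  rw [Finset.sum_comm]
  refine Finset.sum_congr rfl fun p _ => Finset.sum_congr rfl fun m _ => ?_
  have e1 : m.1 + n.1 - s.1 = ((τ.1 : ℕ) + (n.1 - s.1)) + m.1 - (τ.1 : ℕ) := by omega
  have e2 : m.2 + n.2 - s.2 = ((τ.2 : ℕ) + (n.2 - s.2)) + m.2 - (τ.2 : ℕ) := by omega
  have e3 : (τ.1 : ℕ) + (m.1 + n.1 - s.1) = ((τ.1 : ℕ) + (n.1 - s.1)) + m.1 := by omega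
  have e4 : (τ.2 : ℕ) + (m.2 + n.2 - s.2) = ((τ.2 : ℕ) + (n.2 - s.2)) + m.2 := by omega
  have e5 : α₁ ^ ((τ.1 : ℕ) + (m.1 + n.1 - s.1))
      = α₁ ^ ((τ.1 : ℕ) + (n.1 - s.1)) * α₁ ^ m.1 := by rw [e3, pow_add]
  have e6 : α₂ ^ ((τ.2 : ℕ) + (m.2 + n.2 - s.2))
      = α₂ ^ ((τ.2 : ℕ) + (n.2 - s.2)) * α₂ ^ m.2 := by rw [e4, pow_add]
  rw [e5, e6, mul_pow, mul_pow, pow_right_comm α₁ m.1, pow_right_comm α₂ m.2]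
  ring

private lemma synVanish {F L : Type} [Field F] [Field L] [Algebra F L] {r₁ r₂ : ℕ}
    (α₁ α₂ : L) (τ : Fin r₁ × Fin r₂) (e : Fin r₁ × Fin r₂ → F)
    (f : (ℕ × ℕ) →₀ L) (s : ℕ × ℕ)
    (hvan : ∀ p : Fin r₁ × Fin r₂, e p ≠ 0 →
      (∑ m ∈ f.support, f m * ((α₁ ^ (p.1 : ℕ)) ^ m.1 * (α₂ ^ (p.2 : ℕ)) ^ m.2)) = 0) :
    ∀ n, fApp (synTable α₁ α₂ τ e) f s n = 0 := by
  intro n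
  by_cases h : s.1 ≤ n.1 ∧ s.2 ≤ n.2
  · rw [synExpand α₁ α₂ τ e f s n h.1 h.2]
    refine Finset.sum_eq_zero fun p _ => ?_
    by_cases hp : e p = 0
    · simp [hp]
    · rw [hvan p hp, mul_zero]
  · rw [fApp, if_neg h]

private lemma fApp_sub_smul {L : Type} [Field L] (U : ℕ × ℕ → L) (f g : (ℕ × ℕ) →₀ L)
    (c : L) (s n : ℕ × ℕ) (h : s.1 ≤ n.1 ∧ s.2 ≤ n.2) :
    fApp U (f - c • g) s n = fApp U f s n
      - c * ∑ m ∈ g.support, g m * U (m.1 + n.1 - s.1, m.2 + n.2 - s.2) := by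
  rw [fApp, fApp, if_pos h, if_pos h]
  have hzero : ∀ (q : (ℕ × ℕ) →₀ L), ∀ m ∈ f.support ∪ g.support,
      m ∉ q.support → q m * U (m.1 + n.1 - s.1, m.2 + n.2 - s.2) = 0 := by
    intro q m _ hm
    rw [Finsupp.notMem_support_iff.mp hm, zero_mul]
  have hsub : (f - c • g).support ⊆ f.support ∪ g.support := by
    intro m hm
    simp only [Finsupp.mem_support_iff, Finsupp.sub_apply, Finsupp.smul_apply,
      smul_eq_mul] at hm
    simp only [Finset.mem_union, Finsupp.mem_support_iff]
    by_contra hc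
    push_neg at hc
    rw [hc.1, hc.2, mul_zero, sub_zero] at hm
    exact hm rfl
  rw [Finset.sum_subset hsub (fun m hm hm' => by
    rw [Finsupp.notMem_support_iff.mp hm', zero_mul]),
    Finset.sum_subset Finset.subset_union_left (hzero f),
    Finset.sum_subset Finset.subset_union_right (hzero g),
    Finset.mul_sum, ← Finset.sum_sub_distrib]
  refine Finset.sum_congr rfl fun m _ => ?_
  simp only [Finsupp.sub_apply, Finsupp.smul_apply, smul_eq_mul]
  ring

private lemma fApp_shift {L : Type} [Field L] (U : ℕ × ℕ → L) (g : (ℕ × ℕ) →₀ L)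
    (sg : ℕ × ℕ) (a b : ℕ) :
    fApp U g sg (sg.1 + a, sg.2 + b) = ∑ m ∈ g.support, g m * U (m.1 + a, m.2 + b) := by
  rw [fApp, if_pos ⟨by omega, by omega⟩]
  refine Finset.sum_congr rfl fun m _ => ?_
  have e1 : m.1 + (sg.1 + a) - sg.1 = m.1 + a := by omega
  have e2 : m.2 + (sg.2 + b) - sg.2 = m.2 + b := by omega
  rw [e1, e2]

private lemma vandermonde_zero {L : Type} [Field L] {ι : Type} [DecidableEq ι]
    (t : ℕ) (S : Finset ι) (hcard : S.card ≤ t) (x c : ι → L)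
    (hinj : Set.InjOn x S)
    (hsum : ∀ j < t, ∑ p ∈ S, c p * x p ^ j = 0) :
    ∀ p ∈ S, c p = 0 := by
  intro p₀ hp₀
  set R : Polynomial L := ∏ q ∈ S.erase p₀, (Polynomial.X - Polynomial.C (x q)) with hR
  have hdeg : R.natDegree < t := by
    have h1 : R.natDegree = ∑ q ∈ S.erase p₀, (Polynomial.X - Polynomial.C (x q)).natDegree :=
      Polynomial.natDegree_prod _ _ (fun q _ => Polynomial.X_sub_C_ne_zero (x q))
    have h2 : ∀ q ∈ S.erase p₀, (Polynomial.X - Polynomial.C (x q)).natDegree = 1 :=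
      fun q _ => Polynomial.natDegree_X_sub_C (x q)
    rw [h1, Finset.sum_congr rfl h2, Finset.sum_const, smul_eq_mul, mul_one]
    have := Finset.card_erase_of_mem hp₀
    have hc : 0 < S.card := Finset.card_pos.mpr ⟨p₀, hp₀⟩
    omega
  have key : ∑ p ∈ S, c p * R.eval (x p) = 0 := by
    calc ∑ p ∈ S, c p * R.eval (x p)
        = ∑ p ∈ S, ∑ j ∈ Finset.range t, c p * (R.coeff j * x p ^ j) := by
          refine Finset.sum_congr rfl fun p _ => ?_
          rw [Polynomial.eval_eq_sum_range' hdeg, Finset.mul_sum]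
      _ = ∑ j ∈ Finset.range t, ∑ p ∈ S, c p * (R.coeff j * x p ^ j) := Finset.sum_comm
      _ = ∑ j ∈ Finset.range t, R.coeff j * ∑ p ∈ S, c p * x p ^ j := by
          refine Finset.sum_congr rfl fun j _ => ?_
          rw [Finset.mul_sum]
          exact Finset.sum_congr rfl fun p _ => by ring
      _ = 0 := Finset.sum_eq_zero fun j hj => by
          rw [hsum j (Finset.mem_range.mp hj), mul_zero]
  have hsingle : ∑ p ∈ S, c p * R.eval (x p) = c p₀ * R.eval (x p₀) := by
    refine Finset.sum_eq_single_of_mem p₀ hp₀ fun q hq hne => ?_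
    have : R.eval (x q) = 0 := by
      rw [hR, Polynomial.eval_prod]
      refine Finset.prod_eq_zero (Finset.mem_erase.mpr ⟨hne, hq⟩) ?_
      simp
    rw [this, mul_zero]
  have hne0 : R.eval (x p₀) ≠ 0 := by
    rw [hR, Polynomial.eval_prod]
    refine Finset.prod_ne_zero_iff.mpr fun q hq => ?_
    simp only [Polynomial.eval_sub, Polynomial.eval_X, Polynomial.eval_C]
    have hq' := Finset.mem_erase.mp hq
    exact sub_ne_zero.mpr fun hxy => hq'.1 (hinj hq'.2 hp₀ hxy.symm)
  rw [hsingle] at key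
  exact (mul_eq_zero.mp key).resolve_right hne0

private def rowEmb : ℕ ↪ ℕ × ℕ :=
  ⟨fun j => (0, j), fun a b h => by simpa using h⟩

private noncomputable def rowPoly {L : Type} [Field L] (P : Polynomial L) : (ℕ × ℕ) →₀ L :=
  Finsupp.embDomain rowEmb P.toFinsupp.coeff

private lemma rowPoly_support {L : Type} [Field L] (P : Polynomial L) :
    (rowPoly P).support = P.support.map rowEmb := by
  rw [rowPoly, Finsupp.support_embDomain]
  rfl

private lemma rowPoly_eval {L : Type} [Field L] (P : Polynomial L) (x y : L) :
    ∑ m ∈ (rowPoly P).support, rowPoly P m * (x ^ m.1 * y ^ m.2) = P.eval y := by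
  rw [rowPoly_support, Finset.sum_map]
  have : ∀ j ∈ P.support, rowPoly P (rowEmb j) * (x ^ (rowEmb j).1 * y ^ (rowEmb j).2)
      = P.coeff j * y ^ j := by
    intro j _
    rw [rowPoly, Finsupp.embDomain_apply]
    simp [rowEmb, Polynomial.coeff, Function.Embedding.coeFn_mk]
    exact Or.inl (by show x ^ 0 * y ^ j = y ^ j; simp)
  rw [Finset.sum_congr rfl this, Polynomial.eval_eq_sum, Polynomial.sum_def]


private lemma lexle (a b : ℕ × ℕ) :
    lexMonOrd.le a b ↔ (a.1 < b.1 ∨ (a.1 = b.1 ∧ a.2 ≤ b.2)) := Iff.rfl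

private lemma lexlt (a b : ℕ × ℕ) :
    lexMonOrd.lt a b ↔
      ((a.1 < b.1 ∨ (a.1 = b.1 ∧ a.2 ≤ b.2)) ∧ ¬(a.1 = b.1 ∧ a.2 = b.2)) := by
  unfold MonOrd.lt
  rw [lexle, Ne, Prod.ext_iff]

end Aux

/-- lexicographic order, X₁ > X₂; exceptional case d = 2, s⁽¹⁾₁ = 1 = l₁,
s⁽²⁾₂ = t: existence of b ∈ L such that h_b = f⁽¹⁾ − (b/v₁)·g generates u^l and
kills all later points of B(2t+1). -/
theorem exceptional_case_lex
    (q : ℕ) (hq : IsPrimePow q)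
    (F : Type) [Field F] [Fintype F] (hF : Fintype.card F = q)
    (L : Type) [Field L] [Algebra F L]
    (r₁ r₂ : ℕ) (hr₁ : 0 < r₁) (hr₂ : 0 < r₂) (hco : Nat.Coprime q (r₁ * r₂))
    (α₁ α₂ : L) (hα₁ : IsPrimitiveRoot α₁ r₁) (hα₂ : IsPrimitiveRoot α₂ r₂)
    (t : ℕ) (ht2 : 2 ≤ t) (ht4 : t ≤ 4) (htr1 : t ≤ r₁ / 2) (htr2 : t ≤ r₂ / 2)
    (e : Fin r₁ × Fin r₂ → F) (hω : wt e ≤ t) (τ : Fin r₁ × Fin r₂)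
    (U : ℕ × ℕ → L) (hU : U = synTable α₁ α₂ τ e)
    (l : ℕ × ℕ) (hl : l ∈ frontF r₁ r₂ t) (hl1 : l.1 = 1) (hl2 : l.2 ≠ 0)
    (f₁ f₂ : (ℕ × ℕ) →₀ L) (s₁ s₂ : ℕ × ℕ)
    (hLP1 : IsLP lexMonOrd f₁ s₁) (hLP2 : IsLP lexMonOrd f₂ s₂)
    (hstair1 : s₂.1 = 0) (hstair2 : s₁.2 = 0)
    (hstair3 : s₂.1 < s₁.1) (hstair4 : s₁.2 < s₂.2)
    (hs1 : s₁.1 = 1) (hs2 : s₂.2 = t)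
    (hgen1 : ∀ k : ℕ × ℕ, s₁.1 ≤ k.1 → s₁.2 ≤ k.2 → lexMonOrd.lt k l → fApp U f₁ s₁ k = 0)
    (hgen2 : ∀ k : ℕ × ℕ, s₂.1 ≤ k.1 → s₂.2 ≤ k.2 → lexMonOrd.lt k l → fApp U f₂ s₂ k = 0)
    (hmin : ∀ (g : (ℕ × ℕ) →₀ L) (sg : ℕ × ℕ), IsLP lexMonOrd g sg →
      sg.1 ≤ s₁.1 - 1 → sg.2 ≤ s₂.2 - 1 →
      ∃ k : ℕ × ℕ, sg.1 ≤ k.1 ∧ sg.2 ≤ k.2 ∧ lexMonOrd.lt k l ∧ fApp U g sg k ≠ 0)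
    (g : (ℕ × ℕ) →₀ L) (sg k₁ : ℕ × ℕ) (hgLP : IsLP lexMonOrd g sg)
    (hk₁l : lexMonOrd.lt k₁ l)
    (hgpast : ∀ m : ℕ × ℕ, sg.1 ≤ m.1 → sg.2 ≤ m.2 → lexMonOrd.lt m k₁ → fApp U g sg m = 0)
    (hk₁LP : (k₁.1 - sg.1, k₁.2 - sg.2) = (s₁.1 - 1, s₂.2 - 1))
    (v₁ : L) (hv₁ : fApp U g sg k₁ = v₁) (hv₁0 : v₁ ≠ 0) :
    ∃ b : L, ∃ sh : ℕ × ℕ,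
      IsLP lexMonOrd (f₁ - (b / v₁) • g) sh ∧
      (∀ k : ℕ × ℕ, sh.1 ≤ k.1 → sh.2 ≤ k.2 → lexMonOrd.lt k l →
        fApp U (f₁ - (b / v₁) • g) sh k = 0) ∧
      (∀ k ∈ hypB r₁ r₂ (2 * t + 1), lexMonOrd.le l k →
        fApp U (f₁ - (b / v₁) • g) sh k = 0) := by
  classical
  subst hU
  simp only [frontF, hypB, Set.mem_setOf_eq] at hl
  obtain ⟨⟨hlr1, hlr2, hlprod, hlne1, hlne2⟩, hlge⟩ := hl
  have hlt : l.2 = t - 1 := by rw [hl1] at hlprod hlge; omega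
  -- basic facts about g, sg, k₁
  have hk1 : sg.1 ≤ k₁.1 ∧ sg.2 ≤ k₁.2 := by
    by_contra hc
    rw [fApp, if_neg hc] at hv₁
    exact hv₁0 hv₁.symm
  have hkcomp : k₁.1 - sg.1 = 0 ∧ k₁.2 - sg.2 = t - 1 := by
    rw [Prod.ext_iff] at hk₁LP
    exact ⟨by omega, by omega⟩
  rw [lexlt] at hk₁l
  have hkfacts : k₁.1 = 0 ∧ sg.1 = 0 ∧ k₁.2 = sg.2 + (t - 1) := by omega
  have hgrow : ∀ m ∈ g.support, m.1 = 0 ∧ m.2 ≤ sg.2 := by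
    intro m hm
    have := hgLP.2 m hm
    rw [lexle] at this
    omega
  -- the error support and its second-coordinate image
  set S : Finset (Fin r₁ × Fin r₂) := Finset.univ.filter (fun p => e p ≠ 0) with hS
  have hSmem : ∀ p, p ∈ S ↔ e p ≠ 0 := by intro p; simp [hS]
  have hwt : wt e = S.card := by
    rw [wt, show {p | e p ≠ 0} = (S : Set (Fin r₁ × Fin r₂)) by ext p; simp [hSmem p]]
    exact Set.ncard_coe_finset S
  set T : Finset (Fin r₂) := S.image Prod.snd with hT
  have hTcard : t ≤ T.card := by
    by_contra hTc
    push_neg at hTc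
    set P : Polynomial L := ∏ y ∈ T, (Polynomial.X - Polynomial.C (α₂ ^ (y : ℕ))) with hP
    have hPmonic : P.Monic :=
      Polynomial.monic_prod_of_monic _ _ fun y _ => Polynomial.monic_X_sub_C _
    have hPdeg : P.natDegree = T.card := by
      rw [hP, Polynomial.natDegree_prod _ _ (fun y _ => Polynomial.X_sub_C_ne_zero _)]
      have hone : ∀ y ∈ T, (Polynomial.X - Polynomial.C (α₂ ^ (y : ℕ))).natDegree = 1 :=
        fun y _ => Polynomial.natDegree_X_sub_C _
      rw [Finset.sum_congr rfl hone, Finset.sum_const, smul_eq_mul, mul_one]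
    have hLPσ : IsLP lexMonOrd (rowPoly P) (0, P.natDegree) := by
      constructor
      · rw [rowPoly_support, Finset.mem_map]
        exact ⟨P.natDegree, Polynomial.natDegree_mem_support_of_nonzero hPmonic.ne_zero, rfl⟩
      · intro m hm
        rw [rowPoly_support, Finset.mem_map] at hm
        obtain ⟨j, hj, rfl⟩ := hm
        have hjd := Polynomial.le_natDegree_of_mem_supp j hj
        rw [lexle]
        right
        refine ⟨rfl, ?_⟩
        exact hjd
    obtain ⟨k, hk1', hk2', hk3', hk4'⟩ :=
      hmin (rowPoly P) (0, P.natDegree) hLPσ (by omega) (by omega)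
    apply hk4'
    apply synVanish
    intro p hp
    have hmem : p.2 ∈ T := Finset.mem_image_of_mem _ ((hSmem p).mpr hp)
    rw [rowPoly_eval P (α₁ ^ (p.1 : ℕ)) (α₂ ^ (p.2 : ℕ)), hP, Polynomial.eval_prod]
    exact Finset.prod_eq_zero hmem (by simp)
  have hST : T.card ≤ S.card := Finset.card_image_le
  have hScard : S.card = t := by omega
  have hTS : (S.image Prod.snd).card = S.card := by rw [← hT]; omega
  have hinj2 : Set.InjOn Prod.snd (S : Set (Fin r₁ × Fin r₂)) :=
    Finset.injOn_of_card_image_eq hTS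
  have hxinj : Set.InjOn (fun p : Fin r₁ × Fin r₂ => α₂ ^ ((p.2 : ℕ))) (S : Set _) := by
    intro p hp q hq hxy
    have h2 : (p.2 : ℕ) = (q.2 : ℕ) := hα₂.pow_inj p.2.isLt q.2.isLt hxy
    exact hinj2 hp hq (Fin.val_injective h2)
  -- the update
  set b : L := fApp (synTable α₁ α₂ τ e) f₁ s₁ l with hb
  set h : (ℕ × ℕ) →₀ L := f₁ - (b / v₁) • g with hh
  have hrow : ∀ j < t, fApp (synTable α₁ α₂ τ e) h s₁ (1, j) = 0 := by
    intro j hj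
    have hcond : s₁.1 ≤ (1, j).1 ∧ s₁.2 ≤ (1, j).2 := ⟨by omega, by omega⟩
    rw [hh, fApp_sub_smul _ _ _ _ _ _ hcond]
    have hgsum : ∑ m ∈ g.support,
        g m * synTable α₁ α₂ τ e (m.1 + (1, j).1 - s₁.1, m.2 + (1, j).2 - s₁.2)
        = fApp (synTable α₁ α₂ τ e) g sg (sg.1 + 0, sg.2 + j) := by
      rw [fApp_shift]
      refine Finset.sum_congr rfl fun m _ => ?_
      have e1 : m.1 + (1, j).1 - s₁.1 = m.1 + 0 := by omega
      have e2 : m.2 + (1, j).2 - s₁.2 = m.2 + j := by omega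
      rw [e1, e2]
    rw [hgsum]
    rcases Nat.lt_or_ge j (t - 1) with hjlt | hjge
    · rw [hgen1 (1, j) (by omega) (by omega)
        (by rw [lexlt]; omega)]
      rw [hgpast (sg.1 + 0, sg.2 + j) (by omega) (by omega)
        (by rw [lexlt]; omega)]
      ring
    · have hk' : ((sg.1 + 0 : ℕ), (sg.2 + j : ℕ)) = k₁ := by
        rw [Prod.ext_iff]
        exact ⟨by omega, by omega⟩
      have hl' : ((1 : ℕ), j) = l := by
        rw [Prod.ext_iff]
        exact ⟨by omega, by omega⟩
      rw [hk', hv₁, hl', ← hb, div_mul_cancel₀ b hv₁0, sub_self]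
  -- Vandermonde: h vanishes at all error points
  have hvan : ∀ p ∈ S,
      ∑ m ∈ h.support, h m * ((α₁ ^ (p.1 : ℕ)) ^ m.1 * (α₂ ^ (p.2 : ℕ)) ^ m.2) = 0 := by
    set c : Fin r₁ × Fin r₂ → L := fun p =>
      (algebraMap F L (e p) * (α₁ ^ ((τ.1 : ℕ))) ^ (p.1 : ℕ) * (α₂ ^ ((τ.2 : ℕ))) ^ (p.2 : ℕ))
        * (∑ m ∈ h.support, h m * ((α₁ ^ (p.1 : ℕ)) ^ m.1 * (α₂ ^ (p.2 : ℕ)) ^ m.2)) with hc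
    have hcz : ∀ p ∈ S, c p = 0 := by
      apply vandermonde_zero t S hScard.le (fun p => α₂ ^ ((p.2 : ℕ))) c hxinj
      intro j hj
      have hthis := hrow j hj
      rw [synExpand _ _ _ _ _ _ _ (by omega) (by omega)] at hthis
      rw [show ((τ.1 : ℕ) + ((1, j).1 - s₁.1)) = (τ.1 : ℕ) by omega,
        show ((τ.2 : ℕ) + ((1, j).2 - s₁.2)) = (τ.2 : ℕ) + j by omega] at hthis
      refine Eq.trans ?_ hthis
      rw [Finset.sum_subset (Finset.subset_univ S) ?hout]
      · refine Finset.sum_congr rfl fun p _ => ?_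
        rw [hc]
        rw [pow_add α₂, mul_pow, pow_right_comm α₂ j]
        ring
      · intro p _ hp
        have hep : e p = 0 := by
          by_contra hep
          exact hp ((hSmem p).mpr hep)
        rw [hc]
        simp [hep]
    intro p hp
    have hcp := hcz p hp
    rw [hc] at hcp
    have hA : algebraMap F L (e p) * (α₁ ^ ((τ.1 : ℕ))) ^ (p.1 : ℕ)
        * (α₂ ^ ((τ.2 : ℕ))) ^ (p.2 : ℕ) ≠ 0 := by
      have h1 : algebraMap F L (e p) ≠ 0 := by
        simpa using (algebraMap F L).injective.ne_iff.mpr ((hSmem p).mp hp)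
      have h2 : α₁ ≠ 0 := hα₁.ne_zero hr₁.ne'
      have h3 : α₂ ≠ 0 := hα₂.ne_zero hr₂.ne'
      exact mul_ne_zero (mul_ne_zero h1 (pow_ne_zero _ (pow_ne_zero _ h2)))
        (pow_ne_zero _ (pow_ne_zero _ h3))
    exact (mul_eq_zero.mp hcp).resolve_left hA
  have hall : ∀ n, fApp (synTable α₁ α₂ τ e) h s₁ n = 0 :=
    synVanish α₁ α₂ τ e h s₁ (fun p hp => hvan p ((hSmem p).mpr hp))
  have hLPh : IsLP lexMonOrd h s₁ := by
    constructor
    · rw [Finsupp.mem_support_iff, hh, Finsupp.sub_apply, Finsupp.smul_apply, smul_eq_mul]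
      have hg0 : g s₁ = 0 := by
        by_contra hg
        have := (hgrow s₁ (Finsupp.mem_support_iff.mpr hg)).1
        omega
      rw [hg0, mul_zero, sub_zero]
      exact Finsupp.mem_support_iff.mp hLP1.1
    · intro m hm
      rw [Finsupp.mem_support_iff, hh, Finsupp.sub_apply, Finsupp.smul_apply,
        smul_eq_mul] at hm
      by_cases hf : f₁ m = 0
      · have hg : g m ≠ 0 := by
          intro h0
          rw [hf, h0, mul_zero, sub_zero] at hm
          exact hm rfl
        have := (hgrow m (Finsupp.mem_support_iff.mpr hg)).1
        rw [lexle]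
        omega
      · exact hLP1.2 m (Finsupp.mem_support_iff.mpr hf)
  exact ⟨b, s₁, hLPh, fun k _ _ _ => hall k, fun k _ _ => hall k⟩
end

section
/- Let ≤_T be either the lexicographic order with X₁ > X₂ or the graded order with X₂ > X₁. Let 2 ≤ t ≤ 4 with t ≤ ⌊r₁/2⌋ and t ≤ ⌊r₂/2⌋, let e ∈ 𝔽(r₁,r₂) with ω(e) ≤ t, let τ ∈ 𝓘, and let U be the syndrome table afforded by τ and e. Let l = (3,1) ∈ 𝔉. Let F = {f^(1), f^(2)} be a minimal set of polynomials for u^l with defining points s^(1) = (2,0) and s^(2) = (0,2), and let (g, k₁) be an auxiliary polynomial for index 1 with v₁ = g[U]_{k₁} ≠ 0. Then there exists b ∈ L such that the polynomial h_b = f^(1) − (b/v₁)·g generates u^l and satisfies h_b[U]_k = 0 for every k ∈ B(2t+1) with l ≤_T k. -/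
section Helpers

lemma MonOrd.le_of_add_le_add (T : MonOrd) {a b c : ℕ × ℕ} (h : T.le (a + c) (b + c)) :
    T.le a b := by
  rcases T.total a b with h' | h'
  · exact h'
  · have h2 := T.add_right _ _ c h'
    have h3 := T.antisymm _ _ h h2
    have h4 : a = b := by
      have h5 : a.1 + c.1 = b.1 + c.1 := congrArg Prod.fst h3
      have h6 : a.2 + c.2 = b.2 + c.2 := congrArg Prod.snd h3
      exact Prod.ext (by omega) (by omega)
    exact h4 ▸ T.refl _

lemma MonOrd.lt_of_add_lt_add (T : MonOrd) {a b c : ℕ × ℕ} (h : T.lt (a + c) (b + c)) :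
    T.lt a b :=
  ⟨T.le_of_add_le_add h.1, fun he => h.2 (by rw [he])⟩

lemma MonOrd.add_lt_add (T : MonOrd) {a b : ℕ × ℕ} (c : ℕ × ℕ) (h : T.lt a b) :
    T.lt (a + c) (b + c) := by
  refine ⟨T.add_right _ _ _ h.1, fun he => h.2 ?_⟩
  have h5 : a.1 + c.1 = b.1 + c.1 := congrArg Prod.fst he
  have h6 : a.2 + c.2 = b.2 + c.2 := congrArg Prod.snd he
  exact Prod.ext (by omega) (by omega)

lemma exists_T_max (T : MonOrd) (s : Finset (ℕ × ℕ)) (hs : s.Nonempty) :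
    ∃ a ∈ s, ∀ b ∈ s, T.le b a := by
  classical
  induction s using Finset.induction_on with
  | empty => simp at hs
  | @insert a t ha ih =>
    by_cases ht : t.Nonempty
    · obtain ⟨m, hm, hmax⟩ := ih ht
      rcases T.total a m with h | h
      · exact ⟨m, Finset.mem_insert_of_mem hm, fun b hb => by
          rcases Finset.mem_insert.mp hb with rfl | hb
          · exact h
          · exact hmax b hb⟩
      · exact ⟨a, Finset.mem_insert_self a t, fun b hb => by
          rcases Finset.mem_insert.mp hb with rfl | hb
          · exact T.refl _
          · exact T.trans _ _ _ (hmax b hb) h⟩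
    · rw [Finset.not_nonempty_iff_eq_empty] at ht
      subst ht
      refine ⟨a, by simp, fun b hb => ?_⟩
      simp only [Finset.mem_insert, Finset.notMem_empty, or_false] at hb
      subst hb; exact T.refl _

lemma polyEval_sum_subset {L : Type} [Field L] (f : (ℕ × ℕ) →₀ L) (x y : L)
    {s : Finset (ℕ × ℕ)} (hs : f.support ⊆ s) :
    polyEval f x y = ∑ m ∈ s, f m * x ^ m.1 * y ^ m.2 :=
  Finset.sum_subset hs (fun m _ hm => by
    simp [Finsupp.notMem_support_iff.mp hm])

lemma polyEval_sub_smul {L : Type} [Field L] (f g : (ℕ × ℕ) →₀ L) (c x y : L) :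
    polyEval (f - c • g) x y = polyEval f x y - c * polyEval g x y := by
  classical
  have hset : (f - c • g).support ⊆ f.support ∪ g.support :=
    Finsupp.support_sub.trans
      (Finset.union_subset_union (le_refl _) Finsupp.support_smul)
  rw [polyEval_sum_subset _ x y hset,
    polyEval_sum_subset f x y Finset.subset_union_left,
    polyEval_sum_subset g x y Finset.subset_union_right,
    Finset.mul_sum, ← Finset.sum_sub_distrib]
  refine Finset.sum_congr rfl fun m _ => ?_
  simp only [Finsupp.sub_apply, Finsupp.smul_apply, smul_eq_mul]
  ring

lemma fApp_syn' {F L : Type} [Field F] [Field L] [Algebra F L] {r₁ r₂ : ℕ}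
    (α₁ α₂ : L) (τ : Fin r₁ × Fin r₂) (e : Fin r₁ × Fin r₂ → F)
    (f : (ℕ × ℕ) →₀ L) (s d : ℕ × ℕ) :
    fApp (synTable α₁ α₂ τ e) f s (s + d) =
      ∑ p : Fin r₁ × Fin r₂, algebraMap F L (e p)
        * (α₁ ^ (p.1 : ℕ)) ^ ((τ.1 : ℕ) + d.1) * (α₂ ^ (p.2 : ℕ)) ^ ((τ.2 : ℕ) + d.2)
        * polyEval f (α₁ ^ (p.1 : ℕ)) (α₂ ^ (p.2 : ℕ)) := by
  rw [fApp, if_pos ⟨by simp, by simp⟩]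
  have h1 : ∀ a : ℕ, a + (s + d).1 - s.1 = a + d.1 := fun a => by
    simp only [Prod.fst_add]; omega
  have h2 : ∀ a : ℕ, a + (s + d).2 - s.2 = a + d.2 := fun a => by
    simp only [Prod.snd_add]; omega
  simp only [h1, h2, synTable, polyEval, Finset.mul_sum]
  rw [Finset.sum_comm]
  refine Finset.sum_congr rfl fun p _ => Finset.sum_congr rfl fun m _ => ?_
  rw [show (τ.1 : ℕ) + (m.1 + d.1) = ((τ.1 : ℕ) + d.1) + m.1 from by omega,
    show (τ.2 : ℕ) + (m.2 + d.2) = ((τ.2 : ℕ) + d.2) + m.2 from by omega]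
  ring

end Helpers

/-- either order; exceptional case d = 2, s⁽¹⁾ = (2,0), s⁽²⁾ = (0,2),
l = (3,1): existence of b ∈ L such that h_b = f⁽¹⁾ − (b/v₁)·g generates u^l and
kills all later points of B(2t+1). -/
theorem exceptional_case_three_one
    (q : ℕ) (hq : IsPrimePow q)
    (F : Type) [Field F] [Fintype F] (hF : Fintype.card F = q)
    (L : Type) [Field L] [Algebra F L]
    (r₁ r₂ : ℕ) (hr₁ : 0 < r₁) (hr₂ : 0 < r₂) (hco : Nat.Coprime q (r₁ * r₂))
    (α₁ α₂ : L) (hα₁ : IsPrimitiveRoot α₁ r₁) (hα₂ : IsPrimitiveRoot α₂ r₂)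
    (T : MonOrd) (hT : T = lexMonOrd ∨ T = grMonOrd)
    (t : ℕ) (ht2 : 2 ≤ t) (ht4 : t ≤ 4) (htr1 : t ≤ r₁ / 2) (htr2 : t ≤ r₂ / 2)
    (e : Fin r₁ × Fin r₂ → F) (hω : wt e ≤ t) (τ : Fin r₁ × Fin r₂)
    (U : ℕ × ℕ → L) (hU : U = synTable α₁ α₂ τ e)
    (l : ℕ × ℕ) (hl : l ∈ frontF r₁ r₂ t) (hleq : l = (3, 1))
    (f₁ f₂ : (ℕ × ℕ) →₀ L) (s₁ s₂ : ℕ × ℕ)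
    (hLP1 : IsLP T f₁ s₁) (hLP2 : IsLP T f₂ s₂)
    (hstair1 : s₂.1 = 0) (hstair2 : s₁.2 = 0)
    (hstair3 : s₂.1 < s₁.1) (hstair4 : s₁.2 < s₂.2)
    (hs1 : s₁ = (2, 0)) (hs2 : s₂ = (0, 2))
    (hgen1 : ∀ k : ℕ × ℕ, s₁.1 ≤ k.1 → s₁.2 ≤ k.2 → T.lt k l → fApp U f₁ s₁ k = 0)
    (hgen2 : ∀ k : ℕ × ℕ, s₂.1 ≤ k.1 → s₂.2 ≤ k.2 → T.lt k l → fApp U f₂ s₂ k = 0)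
    (hmin : ∀ (g : (ℕ × ℕ) →₀ L) (sg : ℕ × ℕ), IsLP T g sg →
      sg.1 ≤ s₁.1 - 1 → sg.2 ≤ s₂.2 - 1 →
      ∃ k : ℕ × ℕ, sg.1 ≤ k.1 ∧ sg.2 ≤ k.2 ∧ T.lt k l ∧ fApp U g sg k ≠ 0)
    (g : (ℕ × ℕ) →₀ L) (sg k₁ : ℕ × ℕ) (hgLP : IsLP T g sg)
    (hk₁l : T.lt k₁ l)
    (hgpast : ∀ m : ℕ × ℕ, sg.1 ≤ m.1 → sg.2 ≤ m.2 → T.lt m k₁ → fApp U g sg m = 0)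
    (hk₁LP : (k₁.1 - sg.1, k₁.2 - sg.2) = (s₁.1 - 1, s₂.2 - 1))
    (v₁ : L) (hv₁ : fApp U g sg k₁ = v₁) (hv₁0 : v₁ ≠ 0) :
    ∃ b : L, ∃ sh : ℕ × ℕ,
      IsLP T (f₁ - (b / v₁) • g) sh ∧
      (∀ k : ℕ × ℕ, sh.1 ≤ k.1 → sh.2 ≤ k.2 → T.lt k l →
        fApp U (f₁ - (b / v₁) • g) sh k = 0) ∧
      (∀ k ∈ hypB r₁ r₂ (2 * t + 1), T.le l k →
        fApp U (f₁ - (b / v₁) • g) sh k = 0) := by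
  classical
  subst hU hleq hs1 hs2
  -- basic order facts
  have T00 : T.lt ((0,0) : ℕ × ℕ) (1,1) := by
    rcases hT with rfl | rfl
    · exact ⟨Or.inl (by decide), by decide⟩
    · exact ⟨Or.inl (by decide), by decide⟩
  have T10 : T.lt ((1,0) : ℕ × ℕ) (1,1) := by
    rcases hT with rfl | rfl
    · exact ⟨Or.inr ⟨rfl, by decide⟩, by decide⟩
    · exact ⟨Or.inl (by decide), by decide⟩
  have T01 : T.lt ((0,1) : ℕ × ℕ) (1,1) := by
    rcases hT with rfl | rfl
    · exact ⟨Or.inl (by decide), by decide⟩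
    · exact ⟨Or.inl (by decide), by decide⟩
  have hk₁eq : k₁ = sg + (1,1) := by
    have h1 : k₁.1 - sg.1 = 1 := congrArg Prod.fst hk₁LP
    have h2 : k₁.2 - sg.2 = 1 := congrArg Prod.snd hk₁LP
    refine Prod.ext ?_ ?_ <;> simp only [Prod.fst_add, Prod.snd_add] <;> omega
  have hslt : T.lt sg ((2,0) : ℕ × ℕ) := by
    apply T.lt_of_add_lt_add (c := (1,1))
    rw [show ((2,0) : ℕ × ℕ) + (1,1) = (3,1) from rfl, ← hk₁eq]
    exact hk₁l
  set b : L := fApp (synTable α₁ α₂ τ e) f₁ (2,0) (3,1) with hbdef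
  set h : (ℕ × ℕ) →₀ L := f₁ - (b / v₁) • g with hhdef
  -- leading power product of h
  have hg20 : g (2,0) = 0 := by
    by_contra hg
    have hmem : ((2,0) : ℕ × ℕ) ∈ g.support := Finsupp.mem_support_iff.mpr hg
    exact hslt.2 (T.antisymm _ _ hslt.1 (hgLP.2 _ hmem))
  have hLPh : IsLP T h (2,0) := by
    constructor
    · rw [Finsupp.mem_support_iff, hhdef]
      simp only [Finsupp.sub_apply, Finsupp.smul_apply, smul_eq_mul, hg20, mul_zero, sub_zero]
      exact Finsupp.mem_support_iff.mp hLP1.1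
    · intro m hm
      rw [hhdef] at hm
      rcases Finset.mem_union.mp (Finsupp.support_sub hm) with hmf | hmg
      · exact hLP1.2 m hmf
      · exact T.trans _ _ _ (hgLP.2 m (Finsupp.support_smul hmg)) hslt.1
  -- moment computations
  have momKey : ∀ d : ℕ × ℕ,
      fApp (synTable α₁ α₂ τ e) h (2,0) ((2,0) + d)
        = fApp (synTable α₁ α₂ τ e) f₁ (2,0) ((2,0) + d)
          - (b / v₁) * fApp (synTable α₁ α₂ τ e) g sg (sg + d) := by
    intro d
    rw [fApp_syn', fApp_syn', fApp_syn', Finset.mul_sum, ← Finset.sum_sub_distrib]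
    refine Finset.sum_congr rfl fun p _ => ?_
    rw [hhdef, polyEval_sub_smul]
    ring
  have momlt : ∀ d : ℕ × ℕ, T.lt d (1,1) →
      fApp (synTable α₁ α₂ τ e) h (2,0) ((2,0) + d) = 0 := by
    intro d hd
    rw [momKey]
    have hf : fApp (synTable α₁ α₂ τ e) f₁ (2,0) ((2,0) + d) = 0 := by
      apply hgen1
      · simp
      · simp
      · have h5 := T.add_lt_add (2,0) hd
        rwa [add_comm d ((2,0) : ℕ × ℕ), add_comm ((1,1) : ℕ × ℕ) ((2,0) : ℕ × ℕ)] at h5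
    have hgz : fApp (synTable α₁ α₂ τ e) g sg (sg + d) = 0 := by
      apply hgpast
      · simp
      · simp
      · rw [hk₁eq]
        have h5 := T.add_lt_add sg hd
        rwa [add_comm d sg, add_comm ((1,1) : ℕ × ℕ) sg] at h5
    rw [hf, hgz, mul_zero, sub_zero]
  have moml : fApp (synTable α₁ α₂ τ e) h (2,0) ((2,0) + (1,1)) = 0 := by
    rw [momKey, show ((2,0) : ℕ × ℕ) + (1,1) = (3,1) from rfl, ← hbdef, ← hk₁eq, hv₁,
      div_mul_cancel₀ b hv₁0, sub_self]
  -- the error support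
  set S : Finset (Fin r₁ × Fin r₂) := Finset.univ.filter (fun p => e p ≠ 0) with hSdef
  have hmemS : ∀ p, p ∈ S ↔ e p ≠ 0 := fun p => by simp [hSdef]
  -- vanishing criterion from minimality
  have vanish : ∀ P : (ℕ × ℕ) →₀ L, P ≠ 0 →
      P.support ⊆ ({(0,0),(1,0),(0,1),(1,1)} : Finset (ℕ × ℕ)) →
      (∀ p : Fin r₁ × Fin r₂, e p ≠ 0 →
        polyEval P (α₁ ^ (p.1 : ℕ)) (α₂ ^ (p.2 : ℕ)) = 0) → False := by
    intro P hP0 hPsupp hPvan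
    obtain ⟨sp, hspmem, hspmax⟩ := exists_T_max T P.support (Finsupp.support_nonempty_iff.mpr hP0)
    have hsp4 := hPsupp hspmem
    simp only [Finset.mem_insert, Finset.mem_singleton] at hsp4
    have hsp1 : sp.1 ≤ 1 ∧ sp.2 ≤ 1 := by
      rcases hsp4 with rfl | rfl | rfl | rfl <;> exact ⟨by norm_num, by norm_num⟩
    obtain ⟨k, hk1, hk2, hkl, hfne⟩ := hmin P sp ⟨hspmem, hspmax⟩ hsp1.1 hsp1.2
    apply hfne
    have hkeq : k = sp + (k.1 - sp.1, k.2 - sp.2) :=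
      Prod.ext (by simp; omega) (by simp; omega)
    rw [hkeq, fApp_syn']
    refine Finset.sum_eq_zero fun p _ => ?_
    by_cases hp : e p = 0
    · rw [hp, map_zero, zero_mul, zero_mul, zero_mul]
    · rw [hPvan p hp, mul_zero]
  -- independence of the four monomial functions on S
  set mono : Fin 4 → ℕ × ℕ := fun i => if i = 0 then (0,0) else if i = 1 then (1,0) else if i = 2 then (0,1) else (1,1) with hmonodef
  set v : Fin 4 → (↥S → L) := fun i p =>
    (α₁ ^ (((p : Fin r₁ × Fin r₂)).1 : ℕ)) ^ (mono i).1
      * (α₂ ^ (((p : Fin r₁ × Fin r₂)).2 : ℕ)) ^ (mono i).2 with hvdef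
  have hindep : LinearIndependent L v := by
    rw [Fintype.linearIndependent_iff]
    intro cc hcc
    by_contra hne
    push_neg at hne
    obtain ⟨i₀, hi₀⟩ := hne
    set P : (ℕ × ℕ) →₀ L := Finsupp.single (0,0) (cc 0) + Finsupp.single (1,0) (cc 1)
      + Finsupp.single (0,1) (cc 2) + Finsupp.single (1,1) (cc 3) with hPdef
    have hPapp0 : P (0,0) = cc 0 := by simp [hPdef, Finsupp.single_apply, Prod.ext_iff]
    have hPapp1 : P (1,0) = cc 1 := by simp [hPdef, Finsupp.single_apply, Prod.ext_iff]
    have hPapp2 : P (0,1) = cc 2 := by simp [hPdef, Finsupp.single_apply, Prod.ext_iff]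
    have hPapp3 : P (1,1) = cc 3 := by simp [hPdef, Finsupp.single_apply, Prod.ext_iff]
    have hPsupp : P.support ⊆ ({(0,0),(1,0),(0,1),(1,1)} : Finset (ℕ × ℕ)) := by
      intro m hm
      simp only [Finset.mem_insert, Finset.mem_singleton]
      rcases Finset.mem_union.mp (Finsupp.support_add hm) with hm' | hm'
      · rcases Finset.mem_union.mp (Finsupp.support_add hm') with hm'' | hm''
        · rcases Finset.mem_union.mp (Finsupp.support_add hm'') with hm3 | hm3
          · exact Or.inl (Finset.mem_singleton.mp (Finsupp.support_single_subset hm3))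
          · exact Or.inr (Or.inl (Finset.mem_singleton.mp (Finsupp.support_single_subset hm3)))
        · exact Or.inr (Or.inr (Or.inl (Finset.mem_singleton.mp (Finsupp.support_single_subset hm''))))
      · exact Or.inr (Or.inr (Or.inr (Finset.mem_singleton.mp (Finsupp.support_single_subset hm'))))
    have hP0 : P ≠ 0 := by
      intro hz
      apply hi₀
      have hval : P (mono i₀) = cc i₀ := by
        fin_cases i₀
        · exact hPapp0
        · exact hPapp1
        · exact hPapp2
        · exact hPapp3
      rw [← hval, hz, Finsupp.coe_zero, Pi.zero_apply]
    refine vanish P hP0 hPsupp ?_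
    intro p hp
    have hps : p ∈ S := (hmemS p).mpr hp
    have h0 := congrFun hcc (⟨p, hps⟩ : ↥S)
    simp only [Finset.sum_apply, Pi.smul_apply, smul_eq_mul, Pi.zero_apply] at h0
    rw [Fin.sum_univ_four] at h0
    simp only [hvdef, hmonodef, Fin.reduceEq, reduceIte] at h0
    norm_num at h0
    rw [polyEval_sum_subset P _ _ hPsupp]
    rw [show ({(0,0),(1,0),(0,1),(1,1)} : Finset (ℕ × ℕ))
        = insert (0,0) (insert (1,0) (insert (0,1) {(1,1)})) from rfl]
    rw [Finset.sum_insert (by decide), Finset.sum_insert (by decide),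
      Finset.sum_insert (by decide), Finset.sum_singleton]
    rw [hPapp0, hPapp1, hPapp2, hPapp3]
    simp only [pow_zero, pow_one, one_mul, mul_one]
    linear_combination h0
  -- the cardinality of S is 4
  have hcard4 : Fintype.card ↥S = 4 := by
    have h1 : Fintype.card ↥S = S.card := Fintype.card_coe S
    have h2 : S.card ≤ 4 := by
      have hwt : wt e ≤ 4 := le_trans hω ht4
      rw [wt, show {p | e p ≠ 0} = (S : Set (Fin r₁ × Fin r₂)) from by ext p; simp [hSdef],
        Set.ncard_coe_finset] at hwt
      exact hwt
    have h3 : (4 : ℕ) ≤ Fintype.card ↥S := by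
      have h4 := hindep.fintype_card_le_finrank
      rwa [Module.finrank_fintype_fun_eq_card, Fintype.card_fin] at h4
    omega
  have hcardeq : Fintype.card (Fin 4) = Module.finrank L (↥S → L) := by
    rw [Fintype.card_fin, Module.finrank_fintype_fun_eq_card, hcard4]
  set B := basisOfLinearIndependentOfCardEqFinrank hindep hcardeq with hBdef
  have hBcoe : ∀ i, B i = v i := fun i => by
    rw [hBdef, coe_basisOfLinearIndependentOfCardEqFinrank]
  -- the coefficient functions
  set Dp : Fin r₁ × Fin r₂ → L := fun p =>
    algebraMap F L (e p) * (α₁ ^ (p.1 : ℕ)) ^ (τ.1 : ℕ) * (α₂ ^ (p.2 : ℕ)) ^ (τ.2 : ℕ)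
      * polyEval h (α₁ ^ (p.1 : ℕ)) (α₂ ^ (p.2 : ℕ)) with hDpdef
  have momsum : ∀ i : Fin 4,
      ∑ p : Fin r₁ × Fin r₂,
        Dp p * ((α₁ ^ (p.1 : ℕ)) ^ (mono i).1 * (α₂ ^ (p.2 : ℕ)) ^ (mono i).2) = 0 := by
    intro i
    have hz : fApp (synTable α₁ α₂ τ e) h (2,0) ((2,0) + mono i) = 0 := by
      fin_cases i
      · exact momlt _ T00
      · exact momlt _ T10
      · exact momlt _ T01
      · exact moml
    rw [fApp_syn'] at hz
    rw [← hz]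
    refine Finset.sum_congr rfl fun p _ => ?_
    rw [hDpdef]
    simp only []
    rw [pow_add, pow_add]
    ring
  -- every error point is a zero of h
  have hvanh : ∀ p : Fin r₁ × Fin r₂, e p ≠ 0 →
      polyEval h (α₁ ^ (p.1 : ℕ)) (α₂ ^ (p.2 : ℕ)) = 0 := by
    intro p hp
    have hps : p ∈ S := (hmemS p).mpr hp
    have hrepr := B.sum_repr (Pi.single (M := fun _ : ↥S => L) (⟨p, hps⟩ : ↥S) (1 : L))
    have hDq : Dp p = ∑ q : ↥S, Dp ↑q * Pi.single (M := fun _ : ↥S => L) (⟨p, hps⟩ : ↥S) (1 : L) q := by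
      rw [Finset.sum_eq_single (⟨p, hps⟩ : ↥S)]
      · simp
      · intro q _ hq
        rw [Pi.single_eq_of_ne hq, mul_zero]
      · intro hq
        exact absurd (Finset.mem_univ _) hq
    have hDq0 : Dp p = 0 := by
      rw [hDq, ← hrepr]
      simp only [Finset.sum_apply, Pi.smul_apply, smul_eq_mul, Finset.mul_sum]
      rw [Finset.sum_comm]
      refine Finset.sum_eq_zero fun i _ => ?_
      have hinner : ∑ q : ↥S,
          Dp ↑q * ((α₁ ^ ((q : Fin r₁ × Fin r₂).1 : ℕ)) ^ (mono i).1
            * (α₂ ^ ((q : Fin r₁ × Fin r₂).2 : ℕ)) ^ (mono i).2) = 0 := by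
        rw [Finset.sum_coe_sort S (fun p => Dp p
          * ((α₁ ^ (p.1 : ℕ)) ^ (mono i).1 * (α₂ ^ (p.2 : ℕ)) ^ (mono i).2))]
        rw [Finset.sum_subset (Finset.subset_univ S)]
        · exact momsum i
        · intro p' _ hp'
          have hz : e p' = 0 := by
            by_contra hne
            exact hp' ((hmemS p').mpr hne)
          rw [hDpdef]
          simp only []
          rw [hz, map_zero, zero_mul, zero_mul, zero_mul, zero_mul]
      calc ∑ q : ↥S, Dp ↑q * (B.repr (Pi.single (M := fun _ : ↥S => L) (⟨p, hps⟩ : ↥S) (1:L)) i * B i q)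
          = B.repr (Pi.single (M := fun _ : ↥S => L) (⟨p, hps⟩ : ↥S) (1:L)) i
            * ∑ q : ↥S, Dp ↑q * ((α₁ ^ ((q : Fin r₁ × Fin r₂).1 : ℕ)) ^ (mono i).1
              * (α₂ ^ ((q : Fin r₁ × Fin r₂).2 : ℕ)) ^ (mono i).2) := by
            rw [Finset.mul_sum]
            refine Finset.sum_congr rfl fun q _ => ?_
            rw [hBcoe i, hvdef]
            simp only []
            ring
        _ = 0 := by rw [hinner, mul_zero]
    have h1 : algebraMap F L (e p) ≠ 0 := fun hz =>
      hp ((algebraMap F L).injective (by rw [hz, map_zero]))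
    have h2 : (α₁ ^ (p.1 : ℕ)) ^ (τ.1 : ℕ) ≠ 0 :=
      pow_ne_zero _ (pow_ne_zero _ (hα₁.ne_zero hr₁.ne'))
    have h3 : (α₂ ^ (p.2 : ℕ)) ^ (τ.2 : ℕ) ≠ 0 :=
      pow_ne_zero _ (pow_ne_zero _ (hα₂.ne_zero hr₂.ne'))
    rw [hDpdef] at hDq0
    simp only [] at hDq0
    rcases mul_eq_zero.mp hDq0 with h4 | h4
    · rcases mul_eq_zero.mp h4 with h5 | h5
      · rcases mul_eq_zero.mp h5 with h6 | h6
        · exact absurd h6 h1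
        · exact absurd h6 h2
      · exact absurd h5 h3
    · exact h4
  -- all applications vanish
  have hzero : ∀ k : ℕ × ℕ, 2 ≤ k.1 → fApp (synTable α₁ α₂ τ e) h (2,0) k = 0 := by
    intro k hk
    have hkeq : k = (2,0) + (k.1 - 2, k.2) := Prod.ext (by simp; omega) (by simp)
    rw [hkeq, fApp_syn']
    refine Finset.sum_eq_zero fun p _ => ?_
    by_cases hp : e p = 0
    · rw [hp, map_zero, zero_mul, zero_mul, zero_mul]
    · rw [hvanh p hp, mul_zero]
  refine ⟨b, (2,0), ?_, ?_, ?_⟩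
  · rw [← hhdef]; exact hLPh
  · intro k hk1 _ _
    rw [← hhdef]
    exact hzero k hk1
  · intro k _ _
    rw [← hhdef]
    by_cases hc : 2 ≤ k.1
    · exact hzero k hc
    · rw [fApp, if_neg]
      intro hcon
      exact hc hcon.1
end
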